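/- Let (x₀, ẋ₀) ∈ ℝ² with F₀ ≠ 0 and T* = 2Λ₀ + Σ₀·ẋ₀. Let T ≥ 0 and let x : ℝ → ℝ be continuously differentiable with deriv x differentiable on [0, T], such that |(deriv (deriv x))(t)| ≤ 1 for all t ∈ [0, T], x(0) = x₀, deriv x (0) = ẋ₀, x(T) = 0, and deriv x (T) = 0. Then T ≥ T*. (T* = 2Λ₀ + Σ₀·ẋ₀ is a lower bound on the time of any admissible transfer of the double integrator from (x₀, ẋ₀) to the origin; together with the achievability of T* by the one-switch bang-bang control, it is the minimum time.) -/

import Mathlib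

/-- Core lower bound: for any admissible trajectory from `(x₀, v₀)` to the origin,
`T ≥ 2√(x₀ + v₀²/2) + v₀`. (Unconditional: if `x₀ + v₀²/2 < 0` the sqrt is `0`.) -/
lemma double_integrator_aux
    (x₀ v₀ : ℝ) (T : ℝ) (hT : 0 ≤ T)
    (x : ℝ → ℝ)
    (hC1 : ContDiff ℝ 1 x)
    (hdiff : DifferentiableOn ℝ (deriv x) (Set.Icc 0 T))
    (hbound : ∀ t ∈ Set.Icc (0 : ℝ) T, |deriv (deriv x) t| ≤ 1)
    (hx0 : x 0 = x₀) (hv0 : deriv x 0 = v₀)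
    (hxT : x T = 0) (hvT : deriv x T = 0) :
    T ≥ 2 * Real.sqrt (x₀ + v₀ ^ 2 / 2) + v₀ := by
  have hcont : Continuous (deriv x) := hC1.continuous_deriv le_rfl
  have hvat : ∀ t ∈ Set.Ioo (0:ℝ) T, DifferentiableAt ℝ (deriv x) t := by
    intro t ht
    exact (hdiff t (Set.mem_Icc_of_Ioo ht)).differentiableAt (Icc_mem_nhds ht.1 ht.2)
  -- f(t) = v(t) + t is monotone on [0,T]
  have hf : MonotoneOn (fun t => deriv x t + t) (Set.Icc 0 T) := by
    apply monotoneOn_of_deriv_nonneg (convex_Icc 0 T)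
    · exact (hcont.add continuous_id).continuousOn
    · rw [interior_Icc]
      exact fun t ht => ((hvat t ht).add differentiableAt_id).differentiableWithinAt
    · rw [interior_Icc]
      intro t ht
      have hd : HasDerivAt (fun s => deriv x s + s) (deriv (deriv x) t + 1) t :=
        ((hvat t ht).hasDerivAt).add (hasDerivAt_id t)
      rw [hd.deriv]
      have hb := abs_le.mp (hbound t (Set.mem_Icc_of_Ioo ht))
      linarith [hb.1]
  -- g(t) = v(t) - t is antitone on [0,T]
  have hg : AntitoneOn (fun t => deriv x t - t) (Set.Icc 0 T) := by
    apply antitoneOn_of_deriv_nonpos (convex_Icc 0 T)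
    · exact (hcont.sub continuous_id).continuousOn
    · rw [interior_Icc]
      exact fun t ht => ((hvat t ht).sub differentiableAt_id).differentiableWithinAt
    · rw [interior_Icc]
      intro t ht
      have hd : HasDerivAt (fun s => deriv x s - s) (deriv (deriv x) t - 1) t :=
        ((hvat t ht).hasDerivAt).sub (hasDerivAt_id t)
      rw [hd.deriv]
      have hb := abs_le.mp (hbound t (Set.mem_Icc_of_Ioo ht))
      linarith [hb.2]
  have h0mem : (0:ℝ) ∈ Set.Icc (0:ℝ) T := ⟨le_rfl, hT⟩
  have hTmem : (T:ℝ) ∈ Set.Icc (0:ℝ) T := ⟨hT, le_rfl⟩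
  -- pointwise lower bounds on v
  have hlow1 : ∀ t ∈ Set.Icc (0:ℝ) T, v₀ - t ≤ deriv x t := by
    intro t ht
    have := hf h0mem ht ht.1
    simp only [hv0] at this
    linarith
  have hlow2 : ∀ t ∈ Set.Icc (0:ℝ) T, t - T ≤ deriv x t := by
    intro t ht
    have := hg ht hTmem ht.2
    simp only [hvT] at this
    linarith
  have hTv1 : v₀ ≤ T := by
    have := hlow1 T hTmem; rw [hvT] at this; linarith
  have hTv2 : -v₀ ≤ T := by
    have := hlow2 0 h0mem; rw [hv0] at this; linarith
  -- fundamental theorem of calculus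
  have hFTC : ∫ t in (0:ℝ)..T, deriv x t = x T - x 0 :=
    intervalIntegral.integral_deriv_eq_sub (fun t _ => hC1.differentiable one_ne_zero t)
      (hcont.intervalIntegrable 0 T)
  set m : ℝ := (T + v₀) / 2 with hm
  have hm0 : 0 ≤ m := by simp only [hm]; linarith
  have hmT : m ≤ T := by simp only [hm]; linarith
  have hsplit : ∫ t in (0:ℝ)..T, deriv x t
      = (∫ t in (0:ℝ)..m, deriv x t) + ∫ t in m..T, deriv x t :=
    (intervalIntegral.integral_add_adjacent_intervals (hcont.intervalIntegrable 0 m)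
      (hcont.intervalIntegrable m T)).symm
  have hI1 : (∫ t in (0:ℝ)..m, (v₀ - t)) ≤ ∫ t in (0:ℝ)..m, deriv x t := by
    apply intervalIntegral.integral_mono_on hm0
      ((continuous_const.sub continuous_id).intervalIntegrable 0 m)
      (hcont.intervalIntegrable 0 m)
    intro t ht
    exact hlow1 t ⟨ht.1, ht.2.trans hmT⟩
  have hI2 : (∫ t in m..T, (t - T)) ≤ ∫ t in m..T, deriv x t := by
    apply intervalIntegral.integral_mono_on hmT
      ((continuous_id.sub continuous_const).intervalIntegrable m T)
      (hcont.intervalIntegrable m T)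
    intro t ht
    exact hlow2 t ⟨hm0.trans ht.1, ht.2⟩
  have hC1' : (∫ t in (0:ℝ)..m, (v₀ - t)) = v₀ * m - m ^ 2 / 2 := by
    rw [intervalIntegral.integral_sub intervalIntegrable_const
      intervalIntegral.intervalIntegrable_id, intervalIntegral.integral_const,
      integral_id, smul_eq_mul]
    ring
  have hC2' : (∫ t in m..T, (t - T)) = (T ^ 2 - m ^ 2) / 2 - (T - m) * T := by
    rw [intervalIntegral.integral_sub intervalIntegral.intervalIntegrable_id
      intervalIntegrable_const, intervalIntegral.integral_const,
      integral_id, smul_eq_mul]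
  have hkey : x₀ + v₀ ^ 2 / 2 ≤ ((T - v₀) / 2) ^ 2 := by
    rw [hC1'] at hI1
    rw [hC2'] at hI2
    rw [hsplit, hxT, hx0] at hFTC
    simp only [hm] at hI1 hI2
    nlinarith [hI1, hI2, hFTC]
  have hsq : Real.sqrt (x₀ + v₀ ^ 2 / 2) ≤ (T - v₀) / 2 := by
    have h1 := Real.sqrt_le_sqrt hkey
    rwa [Real.sqrt_sq (by linarith : (0:ℝ) ≤ (T - v₀) / 2)] at h1
  linarith

/-- If `F₀ ≠ 0`, then `T* = 2Λ₀ + σ₀·v₀` is a lower bound on the transfer time of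
any admissible trajectory of the double integrator from `(x₀, v₀)` to the origin. -/
theorem double_integrator_minimum_time_lower_bound
    (x₀ v₀ : ℝ) (hF : x₀ + Real.sign v₀ * v₀ ^ 2 / 2 ≠ 0)
    (σ₀ Λ₀ Tstar : ℝ)
    (hσ : σ₀ = Real.sign (x₀ + Real.sign v₀ * v₀ ^ 2 / 2))
    (hΛ : Λ₀ = Real.sqrt (σ₀ * x₀ + v₀ ^ 2 / 2))
    (hTstar : Tstar = 2 * Λ₀ + σ₀ * v₀)
    (T : ℝ) (hT : 0 ≤ T)
    (x : ℝ → ℝ)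
    (hC1 : ContDiff ℝ 1 x)
    (hdiff : DifferentiableOn ℝ (deriv x) (Set.Icc 0 T))
    (hbound : ∀ t ∈ Set.Icc (0 : ℝ) T, |deriv (deriv x) t| ≤ 1)
    (hx0 : x 0 = x₀) (hv0 : deriv x 0 = v₀)
    (hxT : x T = 0) (hvT : deriv x T = 0) :
    T ≥ Tstar := by
  rcases lt_or_gt_of_ne hF with hneg | hpos
  · -- σ₀ = -1 : apply the aux lemma to -x
    have hσ' : σ₀ = -1 := by rw [hσ, Real.sign_of_neg hneg]
    have hderivneg : deriv (fun t => -x t) = fun t => -deriv x t := by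
      funext t; exact deriv.neg
    have hge := double_integrator_aux (-x₀) (-v₀) T hT (fun t => -x t) hC1.neg
      (by rw [hderivneg]; exact hdiff.neg)
      (by
        intro t ht
        rw [hderivneg]
        have : deriv (fun s => -deriv x s) t = -deriv (deriv x) t := deriv.neg
        rw [this, abs_neg]
        exact hbound t ht)
      (by simp [hx0]) (by rw [hderivneg]; simp [hv0])
      (by simp [hxT]) (by rw [hderivneg]; simp [hvT])
    rw [hTstar, hσ', hΛ, hσ']
    have : -x₀ + (-v₀) ^ 2 / 2 = -1 * x₀ + v₀ ^ 2 / 2 := by ring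
    rw [this] at hge
    linarith
  · -- σ₀ = 1 : apply the aux lemma directly
    have hσ' : σ₀ = 1 := by rw [hσ, Real.sign_of_pos hpos]
    have hge := double_integrator_aux x₀ v₀ T hT x hC1 hdiff hbound hx0 hv0 hxT hvT
    rw [hTstar, hσ', hΛ, hσ']
    have : (1:ℝ) * x₀ + v₀ ^ 2 / 2 = x₀ + v₀ ^ 2 / 2 := by ring
    rw [this]
    linarith
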